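/- Let [m] be an abelian equivalence class of vertices of Γ and let {𝒫₁, …, 𝒫ₖ} be a pairwise compatible collection of distinct ΓW-partitions, where 𝒫ᵢ is based at mᵢ ∈ V^± whose underlying vertex lies in [m], and Pᵢ is the side of 𝒫ᵢ containing mᵢ. Then the images of φ(P₁,m₁), …, φ(Pₖ,mₖ) in Out(A_Γ) generate a free abelian subgroup of rank k: they pairwise commute as outer automorphisms, and for any integers n₁, …, nₖ, if φ(P₁,m₁)^{n₁} ∘ ⋯ ∘ φ(Pₖ,mₖ)^{nₖ} is an inner automorphism of A_Γ then n₁ = ⋯ = nₖ = 0. -/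

import Mathlib

namespace GW

variable {V : Type*}

/-- `V^±`: the set of generators and their inverses, identified with `V × Bool`;
`(v, true)` is the generator `v` and `(v, false)` is `v⁻¹`. -/
abbrev Vpm (V : Type*) := V × Bool

/-- The inverse of an element of `V^±`. -/
def pinv (x : Vpm V) : Vpm V := (x.1, !x.2)

/-- The link of a vertex: the set of vertices adjacent to it. -/
def lk (Γ : SimpleGraph V) (v : V) : Set V := {w | Γ.Adj v w}

/-- The star of a vertex: its link together with the vertex itself. -/
def st (Γ : SimpleGraph V) (v : V) : Set V := lk Γ v ∪ {v}

/-- A vertex is principal if no vertex has strictly larger link. -/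
def Principal (Γ : SimpleGraph V) (v : V) : Prop := ¬ ∃ w : V, lk Γ v ⊂ lk Γ w

/-- The relation `u ∼ w`: `lk(u) ⊆ st(w)` and `lk(w) ⊆ st(u)`. -/
def Eqv (Γ : SimpleGraph V) (u w : V) : Prop :=
  lk Γ u ⊆ st Γ w ∧ lk Γ w ⊆ st Γ u

/-- For `S ⊆ V`, the set `S^± ⊆ V^±` of elements with underlying vertex in `S`. -/
def pm (S : Set V) : Set (Vpm V) := {x | x.1 ∈ S}

/-- `u` and `w` lie in the same connected component of `Γ − lk(m)`
(the induced subgraph on the complement of the link of `m`). -/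
def SameComp (Γ : SimpleGraph V) (m u w : V) : Prop :=
  ∃ (hu : u ∈ (lk Γ m)ᶜ) (hw : w ∈ (lk Γ m)ᶜ),
    (Γ.induce ((lk Γ m)ᶜ : Set V)).Reachable ⟨u, hu⟩ ⟨w, hw⟩

/-- The vertex set of the connected component of `u` in `Γ − lk(m)`. -/
def comp (Γ : SimpleGraph V) (m u : V) : Set V := {w | SameComp Γ m u w}

/-- `U ⊆ V^±` is `m`-inseparable if `U = {u}` or `U = {u⁻¹}` for a vertex `u` whose
component in `Γ − lk(m)` is the single vertex `u`, or `U = C^±` for a component `C`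
of `Γ − lk(m)` with more than one vertex. -/
def Inseparable (Γ : SimpleGraph V) (m : Vpm V) (U : Set (Vpm V)) : Prop :=
  (∃ u : V, comp Γ m.1 u = {u} ∧ (U = {(u, true)} ∨ U = {(u, false)})) ∨
  (∃ u : V, u ∈ (lk Γ m.1)ᶜ ∧ comp Γ m.1 u ≠ {u} ∧ U = pm (comp Γ m.1 u))

/-- A `ΓW`-subset based at `m`: a union of `m`-inseparable subsets containing `m`
but not `m⁻¹`. -/
def GWSubset (Γ : SimpleGraph V) (m : Vpm V) (P : Set (Vpm V)) : Prop :=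
  m ∈ P ∧ pinv m ∉ P ∧ ∀ x ∈ P, ∃ U : Set (Vpm V), Inseparable Γ m U ∧ x ∈ U ∧ U ⊆ P

/-- `P* = V^± ∖ lk(m)^± ∖ P`. -/
def pstar (Γ : SimpleGraph V) (m : Vpm V) (P : Set (Vpm V)) : Set (Vpm V) :=
  (pm (lk Γ m.1))ᶜ \ P

/-- A `ΓW`-partition `{P | P* | lk(m)^±}` based at `m`, recorded together with its
base `m` and the side `P` containing `m`; both sides are `ΓW`-subsets with at least
two elements. -/
structure GWPartition (Γ : SimpleGraph V) where
  base : Vpm V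
  P : Set (Vpm V)
  hP : GWSubset Γ base P
  hPstar : GWSubset Γ (pinv base) (pstar Γ base P)
  thickP : 2 ≤ P.ncard
  thickPstar : 2 ≤ (pstar Γ base P).ncard

/-- The side `P*` of a `ΓW`-partition. -/
def GWPartition.Pstar {Γ : SimpleGraph V} (Pa : GWPartition Γ) : Set (Vpm V) :=
  pstar Γ Pa.base Pa.P

/-- The (unordered) pair of sides of a `ΓW`-partition; two `ΓW`-partitions are equal
as partitions exactly when they have the same sides. -/
def sidesOf {Γ : SimpleGraph V} (Pa : GWPartition Γ) : Set (Set (Vpm V)) :=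
  {Pa.P, Pa.Pstar}

/-- A `ΓW`-partition splits a vertex `v` if `v` and `v⁻¹` lie in different sides. -/
def Splits {Γ : SimpleGraph V} (Pa : GWPartition Γ) (v : V) : Prop :=
  ((v, true) ∈ Pa.P ∧ (v, false) ∈ Pa.Pstar) ∨
  ((v, false) ∈ Pa.P ∧ (v, true) ∈ Pa.Pstar)

/-- Compatibility of `ΓW`-partitions: some pair of sides is disjoint, or the
underlying vertices of the bases are adjacent with different stars. -/
def Compatible {Γ : SimpleGraph V} (Pa Qa : GWPartition Γ) : Prop :=
  (Pa.P ∩ Qa.P = ∅ ∨ Pa.P ∩ Qa.Pstar = ∅ ∨ Pa.Pstar ∩ Qa.P = ∅ ∨ Pa.Pstar ∩ Qa.Pstar = ∅) ∨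
  (Γ.Adj Pa.base.1 Qa.base.1 ∧ st Γ Pa.base.1 ≠ st Γ Qa.base.1)

/-- Weak compatibility: some pair of sides is disjoint, or the underlying vertices of
the bases are adjacent (hence distinct). -/
def WeakCompatible {Γ : SimpleGraph V} (Pa Qa : GWPartition Γ) : Prop :=
  (Pa.P ∩ Qa.P = ∅ ∨ Pa.P ∩ Qa.Pstar = ∅ ∨ Pa.Pstar ∩ Qa.P = ∅ ∨ Pa.Pstar ∩ Qa.Pstar = ∅) ∨
  Γ.Adj Pa.base.1 Qa.base.1

/-- A `ΓW`-partition is based at the vertex `u` if it is based at `u` or `u⁻¹`, i.e.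
`lk(u)` equals the link of the recorded base and the partition separates `u` from
`u⁻¹`. -/
def BasedAtVtx {Γ : SimpleGraph V} (Pa : GWPartition Γ) (u : V) : Prop :=
  lk Γ u = lk Γ Pa.base.1 ∧ Splits Pa u

/-- `M(U)`: the largest size of a collection of pairwise distinct, pairwise compatible
`ΓW`-partitions, each based at some element of `U`. -/
noncomputable def M (Γ : SimpleGraph V) (U : Set V) : ℕ :=
  sSup {k : ℕ | ∃ C : Finset (GWPartition Γ), C.card = k ∧
    (∀ Pa ∈ C, Pa.base.1 ∈ U) ∧
    (∀ Pa ∈ C, ∀ Qa ∈ C, Pa ≠ Qa → sidesOf Pa ≠ sidesOf Qa ∧ Compatible Pa Qa)}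

/-- `μ(U)`: the largest size of a collection of pairwise distinct, pairwise weakly
compatible `ΓW`-partitions, each based at some element of `U`. -/
noncomputable def Mweak (Γ : SimpleGraph V) (U : Set V) : ℕ :=
  sSup {k : ℕ | ∃ C : Finset (GWPartition Γ), C.card = k ∧
    (∀ Pa ∈ C, Pa.base.1 ∈ U) ∧
    (∀ Pa ∈ C, ∀ Qa ∈ C, Pa ≠ Qa → sidesOf Pa ≠ sidesOf Qa ∧ WeakCompatible Pa Qa)}

/-- The commutation relations defining the right-angled Artin group `A_Γ`. -/
def Rels (Γ : SimpleGraph V) : Set (FreeGroup V) :=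
  {r | ∃ u w : V, Γ.Adj u w ∧
    r = FreeGroup.of u * FreeGroup.of w * (FreeGroup.of u)⁻¹ * (FreeGroup.of w)⁻¹}

/-- The right-angled Artin group `A_Γ`. -/
abbrev RAAG (Γ : SimpleGraph V) := PresentedGroup (Rels Γ)

/-- The generator of `A_Γ` corresponding to a vertex. -/
def ofv (Γ : SimpleGraph V) (v : V) : RAAG Γ := PresentedGroup.of v

/-- The element of `A_Γ` corresponding to an element of `V^±`. -/
def gen (Γ : SimpleGraph V) (x : Vpm V) : RAAG Γ :=
  if x.2 then ofv Γ x.1 else (ofv Γ x.1)⁻¹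

open scoped Classical in
/-- The image of the generator `v` under the Whitehead automorphism `φ(P, m)`. -/
noncomputable def whImage (Γ : SimpleGraph V) (P : Set (Vpm V)) (m : Vpm V) (v : V) :
    RAAG Γ :=
  if (v, true) ∈ P ∧ (v, false) ∈ P then gen Γ m * ofv Γ v * (gen Γ m)⁻¹
  else if v ≠ m.1 ∧ (v, true) ∈ P ∧ (v, false) ∈ pstar Γ m P then ofv Γ v * (gen Γ m)⁻¹
  else if v ≠ m.1 ∧ (v, false) ∈ P ∧ (v, true) ∈ pstar Γ m P then gen Γ m * ofv Γ v
  else ofv Γ v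

/-- `φ` is the Whitehead automorphism `φ(P, m)`: it sends each generator `v` to
`mvm⁻¹` if `v, v⁻¹ ∈ P`; to `vm⁻¹` if `v ∈ P`, `v⁻¹ ∈ P*`, `v ≠ m^{±1}`; to `mv` if
`v⁻¹ ∈ P`, `v ∈ P*`, `v ≠ m^{±1}`; and to `v` otherwise. -/
def IsWhitehead (Γ : SimpleGraph V) (P : Set (Vpm V)) (m : Vpm V)
    (φ : MulAut (RAAG Γ)) : Prop :=
  ∀ v : V, φ (ofv Γ v) = whImage Γ P m v

/-- An automorphism is inner if it is conjugation by some group element. -/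
def IsInner {G : Type*} [Group G] (φ : MulAut G) : Prop :=
  ∃ g : G, ∀ x, φ x = g * x * g⁻¹

/-- Two automorphisms commute as outer automorphisms iff their commutator is inner. -/
def CommuteOuter {G : Type*} [Group G] (φ ψ : MulAut G) : Prop :=
  IsInner (φ * ψ * φ⁻¹ * ψ⁻¹)

/-- The subgroup of inner automorphisms. -/
def Inn (G : Type*) [Group G] : Subgroup (MulAut G) := (MulAut.conj : G →* MulAut G).range

instance innNormal (G : Type*) [Group G] : (Inn G).Normal := by
  constructor
  intro n hn φ
  obtain ⟨g, rfl⟩ := hn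
  refine ⟨φ g, ?_⟩
  ext x
  simp [MulAut.conj, mul_assoc]

/-- The outer automorphism group `Out(G) = Aut(G)/Inn(G)`. -/
abbrev Out (G : Type*) [Group G] := MulAut G ⧸ Inn G

/-- The projection `Aut(G) → Out(G)`. -/
def toOut (G : Type*) [Group G] : MulAut G →* Out G := QuotientGroup.mk' (Inn G)


-- ===== auxiliary development =====

section Aux

variable {Γ : SimpleGraph V}

lemma mem_st_self (Γ : SimpleGraph V) (v : V) : v ∈ st Γ v := Or.inr rfl

open scoped commutatorElement in
lemma adj_commute {u v : V} (h : Γ.Adj u v) : Commute (ofv Γ u) (ofv Γ v) := by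
  have hrel : (FreeGroup.of u * FreeGroup.of v * (FreeGroup.of u)⁻¹ * (FreeGroup.of v)⁻¹ :
      FreeGroup V) ∈ Rels Γ := ⟨u, v, h, rfl⟩
  have h1 : (QuotientGroup.mk (FreeGroup.of u * FreeGroup.of v * (FreeGroup.of u)⁻¹ *
      (FreeGroup.of v)⁻¹) : RAAG Γ) = 1 := by
    rw [QuotientGroup.eq_one_iff]
    exact Subgroup.subset_normalClosure hrel
  have h2 : ⁅ofv Γ u, ofv Γ v⁆ = (1 : RAAG Γ) := h1
  exact commutatorElement_eq_one_iff_commute.mp h2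

lemma commute_ofv_cases {u v : V} (h : u = v ∨ Γ.Adj u v) :
    Commute (ofv Γ u) (ofv Γ v) := by
  rcases h with rfl | h
  · exact Commute.refl _
  · exact adj_commute h

lemma gen_commute {m m' : Vpm V} (h : m.1 = m'.1 ∨ Γ.Adj m.1 m'.1) :
    Commute (gen Γ m) (gen Γ m') := by
  have c : Commute (ofv Γ m.1) (ofv Γ m'.1) := commute_ofv_cases h
  unfold gen
  rcases m.2 <;> rcases m'.2 <;> simp only [if_true, if_false, Bool.false_eq_true]
  · exact c.inv_left.inv_right
  · exact c.inv_left
  · exact c.inv_right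
  · exact c

lemma side_no_lk {m : Vpm V} {P : Set (Vpm V)} (hP : GWSubset Γ m P) :
    ∀ x ∈ P, x.1 ∉ lk Γ m.1 := by
  intro x hx
  obtain ⟨U, hU, hxU, hUP⟩ := hP.2.2 x hx
  rcases hU with ⟨u, hc, hU⟩ | ⟨u, hu, -, hU⟩
  · have husame : u ∈ comp Γ m.1 u := by rw [hc]; rfl
    obtain ⟨hu1, -, -⟩ := husame
    rcases hU with rfl | rfl <;>
    · rcases hxU with rfl
      exact hu1
  · subst hU
    obtain ⟨-, hw, -⟩ := hxU
    exact hw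

lemma side_subset_compl {m : Vpm V} {P : Set (Vpm V)} (hP : GWSubset Γ m P) :
    P ⊆ (pm (lk Γ m.1))ᶜ := fun x hx => side_no_lk hP x hx

lemma mem_pstar_iff {m : Vpm V} {P : Set (Vpm V)} (x : Vpm V) :
    x ∈ pstar Γ m P ↔ x.1 ∉ lk Γ m.1 ∧ x ∉ P := Iff.rfl

end Aux

section Wh

variable {Γ : SimpleGraph V}

open scoped Classical in
/-- left exponent of the multiplier in `φ(P,m)(v)`. -/
noncomputable def aexp (Pq : GWPartition Γ) (v : V) : ℤ :=
  if v = Pq.base.1 then 0 else if (v, false) ∈ Pq.P then 1 else 0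

open scoped Classical in
/-- right exponent of the multiplier in `φ(P,m)(v)`. -/
noncomputable def bexp (Pq : GWPartition Γ) (v : V) : ℤ :=
  if v = Pq.base.1 then 0 else if (v, true) ∈ Pq.P then -1 else 0

lemma whImage_eq (Pq : GWPartition Γ) (v : V) :
    whImage Γ Pq.P Pq.base v
      = gen Γ Pq.base ^ aexp Pq v * ofv Γ v * gen Γ Pq.base ^ bexp Pq v := by
  classical
  unfold whImage aexp bexp
  by_cases hv : v = Pq.base.1
  · have hb1 : ¬((v, true) ∈ Pq.P ∧ (v, false) ∈ Pq.P) := by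
      rintro ⟨h1, h2⟩
      have hm := Pq.hP.1
      have hm' := Pq.hP.2.1
      rcases hB : Pq.base.2
      · exact hm' (by rw [show pinv Pq.base = (v, true) by simp [pinv, hv, hB]]; exact h1)
      · exact hm' (by rw [show pinv Pq.base = (v, false) by simp [pinv, hv, hB]]; exact h2)
    rw [if_neg hb1, if_neg (by rintro ⟨h, -⟩; exact h hv), if_neg (by rintro ⟨h, -⟩; exact h hv),
      if_pos hv, if_pos hv]
    simp
  · rw [if_neg hv, if_neg hv]
    by_cases h1 : (v, true) ∈ Pq.P <;> by_cases h2 : (v, false) ∈ Pq.P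
    · rw [if_pos ⟨h1, h2⟩, if_pos h2, if_pos h1]
      simp [mul_assoc]
    · have hps : (v, false) ∈ pstar Γ Pq.base Pq.P :=
        ⟨side_no_lk Pq.hP (v, true) h1, h2⟩
      rw [if_neg (by rintro ⟨-, h⟩; exact h2 h), if_pos ⟨hv, h1, hps⟩, if_neg h2, if_pos h1]
      simp
    · have hps : (v, true) ∈ pstar Γ Pq.base Pq.P :=
        ⟨side_no_lk Pq.hP (v, false) h2, h1⟩
      rw [if_neg (by rintro ⟨h, -⟩; exact h1 h), if_neg (by rintro ⟨-, h, -⟩; exact h1 h),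
        if_pos ⟨hv, h2, hps⟩, if_pos h2, if_neg h1]
      simp
    · rw [if_neg (by rintro ⟨h, -⟩; exact h1 h), if_neg (by rintro ⟨-, h, -⟩; exact h1 h),
        if_neg (by rintro ⟨-, h, -⟩; exact h2 h), if_neg h2, if_neg h1]
      simp

lemma aexp_eq_zero_of {Pq : GWPartition Γ} {u : V}
    (h : u = Pq.base.1 ∨ u ∈ lk Γ Pq.base.1) : aexp Pq u = 0 := by
  classical
  rcases h with h | h
  · simp [aexp, h]
  · have hne : ¬ u = Pq.base.1 := by
      rintro rfl; exact Γ.irrefl h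
    have : (u, false) ∉ Pq.P := fun hm => side_no_lk Pq.hP _ hm h
    simp [aexp, hne, this]

lemma bexp_eq_zero_of {Pq : GWPartition Γ} {u : V}
    (h : u = Pq.base.1 ∨ u ∈ lk Γ Pq.base.1) : bexp Pq u = 0 := by
  classical
  rcases h with h | h
  · simp [bexp, h]
  · have hne : ¬ u = Pq.base.1 := by
      rintro rfl; exact Γ.irrefl h
    have : (u, true) ∉ Pq.P := fun hm => side_no_lk Pq.hP _ hm h
    simp [bexp, hne, this]

end Wh

section AutAux

variable {G : Type*} [Group G]

lemma mulaut_inv_fix {ψ : MulAut G} {h : G} (hh : ψ h = h) : ψ⁻¹ h = h := by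
  conv_lhs => rw [← hh]
  exact ψ.symm_apply_apply h

lemma mulaut_zpow_fix (ψ : MulAut G) (h : G) (hh : ψ h = h) (z : ℤ) : (ψ ^ z) h = h := by
  induction z using Int.induction_on with
  | zero => simp
  | succ n ih =>
      rw [zpow_add_one, MulAut.mul_apply, hh, ih]
  | pred n ih =>
      rw [zpow_sub_one, MulAut.mul_apply, mulaut_inv_fix hh, ih]

lemma mulaut_inv_formula {ψ : MulAut G} {h x : G} {α β : ℤ} (hh : ψ h = h)
    (hx : ψ x = h ^ α * x * h ^ β) : ψ⁻¹ x = h ^ (-α) * x * h ^ (-β) := by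
  have h1 : ψ⁻¹ (ψ x) = x := ψ.symm_apply_apply x
  rw [hx] at h1
  have h2 : ψ⁻¹ (h ^ α * x * h ^ β) = h ^ α * ψ⁻¹ x * h ^ β := by
    rw [map_mul, map_mul, map_zpow, map_zpow, mulaut_inv_fix hh]
  rw [h2] at h1
  have : ψ⁻¹ x = h ^ (-α) * (h ^ α * ψ⁻¹ x * h ^ β) * h ^ (-β) := by group
  rw [this, h1]

lemma mulaut_zpow_formula (ψ : MulAut G) (h x : G) (α β : ℤ) (hh : ψ h = h)
    (hx : ψ x = h ^ α * x * h ^ β) (z : ℤ) :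
    (ψ ^ z) x = h ^ (z * α) * x * h ^ (z * β) := by
  induction z using Int.induction_on with
  | zero => simp
  | succ n ih =>
      rw [zpow_add_one, MulAut.mul_apply, hx, map_mul, map_mul, map_zpow, map_zpow,
        mulaut_zpow_fix ψ h hh, ih]
      group
  | pred n ih =>
      rw [zpow_sub_one, MulAut.mul_apply, mulaut_inv_formula hh hx, map_mul, map_mul,
        map_zpow, map_zpow, mulaut_zpow_fix ψ h hh, ih]
      group

lemma fixed_list_prod (ψ : MulAut G) (L : List G) (h : ∀ x ∈ L, ψ x = x) :
    ψ L.prod = L.prod := by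
  induction L with
  | nil => simp
  | cons a L ih =>
      rw [List.prod_cons, map_mul, h a (by simp), ih (fun x hx => h x (by simp [hx]))]

end AutAux

section HomExt

lemma raag_hom_ext {Γ : SimpleGraph V} {H : Type*} [Group H] {f g : RAAG Γ →* H}
    (h : ∀ v, f (ofv Γ v) = g (ofv Γ v)) : f = g :=
  PresentedGroup.ext h

end HomExt

-- ===== the affine group over ℚ =====

@[ext]
structure Aff : Type where
  u : ℚˣ
  t : ℚ

namespace Aff

instance : One Aff := ⟨⟨1, 0⟩⟩
instance : Mul Aff := ⟨fun x y => ⟨x.u * y.u, (x.u : ℚ) * y.t + x.t⟩⟩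
instance : Inv Aff := ⟨fun x => ⟨x.u⁻¹, -((x.u⁻¹ : ℚˣ) : ℚ) * x.t⟩⟩

@[simp] lemma mul_u (x y : Aff) : (x * y).u = x.u * y.u := rfl
@[simp] lemma mul_t (x y : Aff) : (x * y).t = (x.u : ℚ) * y.t + x.t := rfl
@[simp] lemma one_u : (1 : Aff).u = 1 := rfl
@[simp] lemma one_t : (1 : Aff).t = 0 := rfl
@[simp] lemma inv_u (x : Aff) : x⁻¹.u = x.u⁻¹ := rfl
@[simp] lemma inv_t (x : Aff) : x⁻¹.t = -((x.u⁻¹ : ℚˣ) : ℚ) * x.t := rfl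

instance : Group Aff where
  mul_assoc x y z := by
    ext <;> simp <;> push_cast <;> ring
  one_mul x := by ext <;> simp
  mul_one x := by ext <;> simp
  inv_mul_cancel x := by
    ext <;> simp

/-- the scaling by 2 -/
noncomputable def u2 : ℚˣ := Units.mk0 2 (by norm_num)

@[simp] lemma u2_val : ((u2 : ℚˣ) : ℚ) = 2 := rfl

/-- translation part generator -/
noncomputable def Ug : Aff := ⟨1, 1⟩
/-- scaling generator -/
noncomputable def Tg : Aff := ⟨u2, 0⟩

lemma Tg_zpow (z : ℤ) : Tg ^ z = ⟨u2 ^ z, 0⟩ := by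
  induction z using Int.induction_on with
  | zero => rw [zpow_zero, zpow_zero]; rfl
  | succ n ih => rw [zpow_add_one, zpow_add_one, ih]; ext <;> simp [Tg]
  | pred n ih => rw [zpow_sub_one, zpow_sub_one, ih]; ext <;> simp [Tg]

lemma Tg_list (L : List ℤ) : (L.map fun z => Tg ^ z).prod = Tg ^ L.sum := by
  induction L with
  | nil => simp
  | cons a L ih => rw [List.map_cons, List.prod_cons, ih, List.sum_cons, zpow_add]

lemma Tg_zpow_inj {z z' : ℤ} (h : Tg ^ z = Tg ^ z') : z = z' := by
  rw [Tg_zpow, Tg_zpow] at h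
  have h2 : ((u2 ^ z : ℚˣ) : ℚ) = ((u2 ^ z' : ℚˣ) : ℚ) := by
    rw [(Aff.mk.injEq _ _ _ _).mp h |>.1]
  rw [Units.val_zpow_eq_zpow_val, Units.val_zpow_eq_zpow_val, u2_val] at h2
  exact zpow_right_injective₀ (by norm_num) (by norm_num) h2

end Aff

section Main

variable {Γ : SimpleGraph V} {m₀ : V}
variable {k : ℕ} {Pa : Fin k → GWPartition Γ} {φ : Fin k → MulAut (RAAG Γ)} {n : Fin k → ℤ}

/-- the multiplier element of the `i`-th Whitehead automorphism -/
noncomputable def gB (Pa : Fin k → GWPartition Γ) (i : Fin k) : RAAG Γ :=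
  gen Γ ((Pa i).base)

variable (habelian : ∀ u : V, Eqv Γ m₀ u → st Γ u = st Γ m₀)
  (hbase : ∀ i, Eqv Γ m₀ ((Pa i).base.1))
  (hφ : ∀ i, IsWhitehead Γ (Pa i).P ((Pa i).base) (φ i))

include habelian hbase

lemma st_base (i : Fin k) : st Γ ((Pa i).base.1) = st Γ m₀ :=
  habelian _ (hbase i)

lemma base_mem_S (i : Fin k) : (Pa i).base.1 ∈ st Γ m₀ := by
  rw [← st_base habelian hbase i]; exact mem_st_self Γ _

lemma base_or_lk (i j : Fin k) :
    (Pa j).base.1 = (Pa i).base.1 ∨ (Pa j).base.1 ∈ lk Γ ((Pa i).base.1) := by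
  by_cases h : (Pa j).base.1 = (Pa i).base.1
  · exact Or.inl h
  · right
    have : (Pa j).base.1 ∈ st Γ ((Pa i).base.1) := by
      rw [st_base habelian hbase i, ← st_base habelian hbase j]
      exact mem_st_self Γ _
    rcases this with h' | h'
    · exact h'
    · exact absurd h' h

lemma base_adj (i j : Fin k) :
    (Pa i).base.1 = (Pa j).base.1 ∨ Γ.Adj ((Pa i).base.1) ((Pa j).base.1) := by
  rcases base_or_lk habelian hbase i j with h | h
  · exact Or.inl h.symm
  · exact Or.inr h

lemma commute_gB (i j : Fin k) : Commute (gB Pa i) (gB Pa j) :=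
  gen_commute (base_adj habelian hbase i j)

lemma aexp_base (i j : Fin k) : aexp (Pa i) ((Pa j).base.1) = 0 :=
  aexp_eq_zero_of (base_or_lk habelian hbase i j)

lemma bexp_base (i j : Fin k) : bexp (Pa i) ((Pa j).base.1) = 0 :=
  bexp_eq_zero_of (base_or_lk habelian hbase i j)

include hφ

lemma phi_apply (i : Fin k) (v : V) :
    φ i (ofv Γ v) = gB Pa i ^ aexp (Pa i) v * ofv Γ v * gB Pa i ^ bexp (Pa i) v :=
  (hφ i v).trans (whImage_eq (Pa i) v)

lemma phi_fix_ofv_base (i j : Fin k) :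
    φ i (ofv Γ ((Pa j).base.1)) = ofv Γ ((Pa j).base.1) := by
  rw [phi_apply habelian hbase hφ i, aexp_base habelian hbase,
    bexp_base habelian hbase]
  simp

lemma phi_fix_gB (i j : Fin k) : φ i (gB Pa j) = gB Pa j := by
  unfold gB gen
  rcases (Pa j).base.2 <;> simp only [if_true, if_false, Bool.false_eq_true, map_inv]
  · rw [phi_fix_ofv_base habelian hbase hφ i j]
  · rw [phi_fix_ofv_base habelian hbase hφ i j]

lemma phi_zpow_fix_gB (i j : Fin k) (z : ℤ) : (φ i ^ z) (gB Pa j) = gB Pa j :=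
  mulaut_zpow_fix _ _ (phi_fix_gB habelian hbase hφ i j) z

lemma phi_zpow_apply (i : Fin k) (v : V) (z : ℤ) :
    (φ i ^ z) (ofv Γ v)
      = gB Pa i ^ (z * aexp (Pa i) v) * ofv Γ v * gB Pa i ^ (z * bexp (Pa i) v) :=
  mulaut_zpow_formula _ _ _ _ _ (phi_fix_gB habelian hbase hφ i i)
    (phi_apply habelian hbase hφ i v) z

lemma prod_apply (l : List (Fin k)) (v : V) :
    ((l.map fun i => φ i ^ n i).prod) (ofv Γ v)
      = (l.map fun i => gB Pa i ^ (n i * aexp (Pa i) v)).prod * ofv Γ v *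
        (l.map fun i => gB Pa i ^ (n i * bexp (Pa i) v)).prod := by
  induction l with
  | nil => simp
  | cons i l ih =>
      rw [List.map_cons, List.prod_cons, MulAut.mul_apply, ih, List.map_cons,
        List.map_cons, List.prod_cons, List.prod_cons]
      rw [map_mul, map_mul]
      rw [phi_zpow_apply habelian hbase hφ i v]
      rw [fixed_list_prod _ _ (by
        intro x hx
        simp only [List.mem_map] at hx
        obtain ⟨j, -, rfl⟩ := hx
        rw [map_zpow, phi_zpow_fix_gB habelian hbase hφ i j])]
      rw [fixed_list_prod _ _ (by
        intro x hx
        simp only [List.mem_map] at hx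
        obtain ⟨j, -, rfl⟩ := hx
        rw [map_zpow, phi_zpow_fix_gB habelian hbase hφ i j])]
      have hc : Commute (gB Pa i ^ (n i * aexp (Pa i) v))
          ((l.map fun j => gB Pa j ^ (n j * aexp (Pa j) v)).prod) := by
        apply Commute.list_prod_right
        intro x hx
        simp only [List.mem_map] at hx
        obtain ⟨j, -, rfl⟩ := hx
        exact (commute_gB habelian hbase i j).zpow_zpow _ _
      calc (l.map fun j => gB Pa j ^ (n j * aexp (Pa j) v)).prod *
            (gB Pa i ^ (n i * aexp (Pa i) v) * ofv Γ v * gB Pa i ^ (n i * bexp (Pa i) v)) *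
            (l.map fun j => gB Pa j ^ (n j * bexp (Pa j) v)).prod
          = ((l.map fun j => gB Pa j ^ (n j * aexp (Pa j) v)).prod *
              gB Pa i ^ (n i * aexp (Pa i) v)) * ofv Γ v *
            (gB Pa i ^ (n i * bexp (Pa i) v) *
              (l.map fun j => gB Pa j ^ (n j * bexp (Pa j) v)).prod) := by
            group
        _ = gB Pa i ^ (n i * aexp (Pa i) v) *
              (l.map fun j => gB Pa j ^ (n j * aexp (Pa j) v)).prod * ofv Γ v *
            (gB Pa i ^ (n i * bexp (Pa i) v) *
              (l.map fun j => gB Pa j ^ (n j * bexp (Pa j) v)).prod) := by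
            rw [hc.eq]
        _ = _ := by group

lemma bigPhi_apply (v : V) :
    ((List.ofFn fun i => φ i ^ n i).prod) (ofv Γ v)
      = (List.ofFn fun i => gB Pa i ^ (n i * aexp (Pa i) v)).prod * ofv Γ v *
        (List.ofFn fun i => gB Pa i ^ (n i * bexp (Pa i) v)).prod := by
  rw [List.ofFn_eq_map, List.ofFn_eq_map, List.ofFn_eq_map]
  exact prod_apply habelian hbase hφ _ v

lemma bigPhi_fix_base (j : Fin k) :
    ((List.ofFn fun i => φ i ^ n i).prod) (ofv Γ ((Pa j).base.1))
      = ofv Γ ((Pa j).base.1) := by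
  rw [bigPhi_apply habelian hbase hφ]
  have h1 : ∀ i : Fin k, gB Pa i ^ (n i * aexp (Pa i) ((Pa j).base.1)) = 1 := by
    intro i; rw [aexp_base habelian hbase i j]; simp
  have h2 : ∀ i : Fin k, gB Pa i ^ (n i * bexp (Pa i) ((Pa j).base.1)) = 1 := by
    intro i; rw [bexp_base habelian hbase i j]; simp
  simp only [h1, h2]
  simp [List.prod_eq_one]

end Main

section Chain

open scoped Classical in
/-- indicator of a set, as an integer -/
noncomputable def indZ {X : Type*} (Q : Set X) (x : X) : ℤ := if x ∈ Q then 1 else 0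

lemma chain_indep {X ι : Type*} [Finite X] (n : ι → ℤ) (Q : ι → Set X)
    (T D : Set X) (xp xm : X) :
    ∀ J : Finset ι,
    (∀ i ∈ J, xp ∈ Q i) → (∀ i ∈ J, xm ∉ Q i) → (∀ i ∈ J, Q i ⊆ T) →
    (∀ i ∈ J, ∃ x ∈ Q i, x ≠ xp) → (∀ i ∈ J, ∃ x ∈ T \ Q i, x ≠ xm) →
    (∀ x ∈ T, x ≠ xp → x ≠ xm → x ∈ D) →
    (∀ i ∈ J, ∀ j ∈ J, Q i ⊆ Q j ∨ Q j ⊆ Q i) →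
    (∀ i ∈ J, ∀ j ∈ J, i ≠ j → Q i ≠ Q j) →
    (∀ x ∈ D, ∀ y ∈ D, (∑ i ∈ J, n i * indZ (Q i) x) = ∑ i ∈ J, n i * indZ (Q i) y) →
    ∀ j ∈ J, n j = 0 := by
  classical
  intro J
  induction J using Finset.strongInduction with
  | _ J ih =>
  intro hxp hxm hQT hth1 hth2 hD hchain hdist hG j hj
  -- pick the minimal element
  obtain ⟨i₀, hi₀, hmin⟩ := Finset.exists_min_image J (fun i => (Q i).ncard) ⟨j, hj⟩
  have hsub : ∀ i ∈ J, Q i₀ ⊆ Q i := by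
    intro i hi
    rcases eq_or_ne i i₀ with rfl | hne
    · exact subset_rfl
    rcases hchain i₀ hi₀ i hi with h | h
    · exact h
    · have heq : Q i = Q i₀ :=
        Set.eq_of_subset_of_ncard_le h (hmin i hi) (Set.toFinite _)
      exact absurd heq (hdist i hi i₀ hi₀ hne)
  -- witness inside the minimal side
  obtain ⟨x₀, hx₀Q, hx₀p⟩ := hth1 i₀ hi₀
  have hx₀m : x₀ ≠ xm := fun h => hxm i₀ hi₀ (h ▸ hx₀Q)
  have hx₀D : x₀ ∈ D := hD x₀ (hQT i₀ hi₀ hx₀Q) hx₀p hx₀m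
  have hGx₀ : (∑ i ∈ J, n i * indZ (Q i) x₀) = ∑ i ∈ J, n i := by
    apply Finset.sum_congr rfl
    intro i hi
    rw [indZ, if_pos (hsub i hi hx₀Q), mul_one]
  -- find the outside witness
  have hn₀ : n i₀ = 0 := by
    by_cases hJ1 : (J.erase i₀).Nonempty
    · obtain ⟨i₁, hi₁e, hmin1⟩ :=
        Finset.exists_min_image (J.erase i₀) (fun i => (Q i).ncard) hJ1
      have hi₁J : i₁ ∈ J := Finset.mem_of_mem_erase hi₁e
      have hi₁ne : i₁ ≠ i₀ := Finset.ne_of_mem_erase hi₁e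
      have hsub1 : ∀ i ∈ J.erase i₀, Q i₁ ⊆ Q i := by
        intro i hi
        rcases eq_or_ne i i₁ with rfl | hne
        · exact subset_rfl
        have hiJ : i ∈ J := Finset.mem_of_mem_erase hi
        rcases hchain i₁ hi₁J i hiJ with h | h
        · exact h
        · have heq : Q i = Q i₁ :=
            Set.eq_of_subset_of_ncard_le h (hmin1 i hi) (Set.toFinite _)
          exact absurd heq (hdist i hiJ i₁ hi₁J hne)
      have hss : Q i₀ ⊂ Q i₁ :=
        ssubset_of_subset_of_ne (hsub i₁ hi₁J) (hdist i₀ hi₀ i₁ hi₁J hi₁ne.symm)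
      obtain ⟨y₀, hy₀1, hy₀0⟩ := Set.exists_of_ssubset hss
      have hy₀p : y₀ ≠ xp := fun h => hy₀0 (h ▸ hxp i₀ hi₀)
      have hy₀m : y₀ ≠ xm := fun h => hxm i₁ hi₁J (h ▸ hy₀1)
      have hy₀D : y₀ ∈ D := hD y₀ (hQT i₁ hi₁J hy₀1) hy₀p hy₀m
      have hGy₀ : (∑ i ∈ J, n i * indZ (Q i) y₀) = ∑ i ∈ J.erase i₀, n i := by
        rw [← Finset.add_sum_erase J _ hi₀]
        rw [indZ, if_neg hy₀0, mul_zero, zero_add]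
        apply Finset.sum_congr rfl
        intro i hi
        rw [indZ, if_pos (hsub1 i hi hy₀1), mul_one]
      have := (hG x₀ hx₀D y₀ hy₀D)
      rw [hGx₀, hGy₀, ← Finset.add_sum_erase J _ hi₀] at this
      linarith
    · -- J = {i₀}
      obtain ⟨y₀, hy₀, hy₀m⟩ := hth2 i₀ hi₀
      have hy₀p : y₀ ≠ xp := fun h => hy₀.2 (h ▸ hxp i₀ hi₀)
      have hy₀D : y₀ ∈ D := hD y₀ hy₀.1 hy₀p hy₀m
      have hJs : J = {i₀} := by
        apply Finset.eq_singleton_iff_unique_mem.mpr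
        refine ⟨hi₀, fun x hx => ?_⟩
        by_contra hne
        exact hJ1 ⟨x, Finset.mem_erase.mpr ⟨hne, hx⟩⟩
      have hGy₀ : (∑ i ∈ J, n i * indZ (Q i) y₀) = 0 := by
        rw [hJs, Finset.sum_singleton, indZ, if_neg hy₀.2, mul_zero]
      have := hG x₀ hx₀D y₀ hy₀D
      rw [hGx₀, hGy₀, hJs, Finset.sum_singleton] at this
      exact this
  -- now recurse on J.erase i₀
  rcases eq_or_ne j i₀ with rfl | hne
  · exact hn₀
  have hjE : j ∈ J.erase i₀ := Finset.mem_erase.mpr ⟨hne, hj⟩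
  refine ih (J.erase i₀) (Finset.erase_ssubset hi₀)
    (fun i hi => hxp i (Finset.mem_of_mem_erase hi))
    (fun i hi => hxm i (Finset.mem_of_mem_erase hi))
    (fun i hi => hQT i (Finset.mem_of_mem_erase hi))
    (fun i hi => hth1 i (Finset.mem_of_mem_erase hi))
    (fun i hi => hth2 i (Finset.mem_of_mem_erase hi))
    hD
    (fun i hi j' hj' => hchain i (Finset.mem_of_mem_erase hi) j' (Finset.mem_of_mem_erase hj'))
    (fun i hi j' hj' => hdist i (Finset.mem_of_mem_erase hi) j' (Finset.mem_of_mem_erase hj'))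
    ?_ j hjE
  intro x hx y hy
  have hx' := hG x hx y hy
  rw [← Finset.add_sum_erase J (fun i => n i * indZ (Q i) x) hi₀,
    ← Finset.add_sum_erase J (fun i => n i * indZ (Q i) y) hi₀] at hx'
  rw [hn₀] at hx'
  simpa using hx'

end Chain

section Analytic

variable {Γ : SimpleGraph V} {m₀ : V}
variable {k : ℕ} {Pa : Fin k → GWPartition Γ} {φ : Fin k → MulAut (RAAG Γ)} {n : Fin k → ℤ}

open scoped Classical in
/-- coefficient recording whether the `i`-th partition is based at `a` or `a⁻¹`. -/
noncomputable def ecoef (Pa : Fin k → GWPartition Γ) (a : V) (i : Fin k) : ℤ :=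
  if (Pa i).base.1 = a then (if (Pa i).base.2 then 1 else -1) else 0

variable (habelian : ∀ u : V, Eqv Γ m₀ u → st Γ u = st Γ m₀)
  (hbase : ∀ i, Eqv Γ m₀ ((Pa i).base.1))
  (hφ : ∀ i, IsWhitehead Γ (Pa i).P ((Pa i).base) (φ i))

include habelian hbase hφ

lemma Aconst {G0 : RAAG Γ}
    (hG0 : ∀ x, ((List.ofFn fun i => φ i ^ n i).prod) x = G0 * x * G0⁻¹)
    {a : V} (ha : st Γ a = st Γ m₀) {v v' : V}
    (hv : v ∉ st Γ m₀) (hv' : v' ∉ st Γ m₀) :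
    (∑ i, ecoef Pa a i * (n i * aexp (Pa i) v))
      = (∑ i, ecoef Pa a i * (n i * aexp (Pa i) v')) ∧
    (∑ i, ecoef Pa a i * (n i * aexp (Pa i) v))
      + (∑ i, ecoef Pa a i * (n i * bexp (Pa i) v)) = 0 := by
  classical
  have haS : a ∈ st Γ m₀ := ha ▸ mem_st_self Γ a
  have hva : v ≠ a := fun h => hv (h ▸ haS)
  have hv'a : v' ≠ a := fun h => hv' (h ▸ haS)
  set fm : V → Aff := fun u => if u = a then Aff.Tg else if u = v ∨ u = v' then Aff.Ug else 1
    with hfm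
  have hlkS : ∀ u, u ∈ lk Γ a → u ∈ st Γ m₀ := fun u hu => ha ▸ Or.inl hu
  have hrels : ∀ r ∈ Rels Γ, FreeGroup.lift fm r = 1 := by
    rintro r ⟨x, y, hadj, rfl⟩
    have hcomm : Commute (fm x) (fm y) := by
      by_cases hx1 : x = a
      · subst hx1
        by_cases hy1 : y = x
        · exact absurd (hy1 ▸ hadj) (Γ.irrefl)
        by_cases hy2 : y = v ∨ y = v'
        · exfalso
          have hyS : y ∈ st Γ m₀ := hlkS y hadj
          rcases hy2 with rfl | rfl
          · exact hv hyS
          · exact hv' hyS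
        · have h1 : fm y = 1 := by
            simp only [hfm]
            rw [if_neg (by intro h; exact hy1 h), if_neg hy2]
          rw [h1]; exact Commute.one_right _
      · by_cases hx2 : x = v ∨ x = v'
        · have hfx : fm x = Aff.Ug := by
            simp only [hfm]; rw [if_neg hx1, if_pos hx2]
          by_cases hy1 : y = a
          · exfalso
            have hxS : x ∈ st Γ m₀ := hlkS x (hy1 ▸ hadj).symm
            rcases hx2 with rfl | rfl
            · exact hv hxS
            · exact hv' hxS
          by_cases hy2 : y = v ∨ y = v'
          · have hfy : fm y = Aff.Ug := by
              simp only [hfm]; rw [if_neg hy1, if_pos hy2]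
            rw [hfx, hfy]
          · have h1 : fm y = 1 := by
              simp only [hfm]; rw [if_neg hy1, if_neg hy2]
            rw [h1]; exact Commute.one_right _
        · have h1 : fm x = 1 := by
            simp only [hfm]; rw [if_neg hx1, if_neg hx2]
          rw [h1]; exact Commute.one_left _
    have : FreeGroup.lift fm
        (FreeGroup.of x * FreeGroup.of y * (FreeGroup.of x)⁻¹ * (FreeGroup.of y)⁻¹)
        = fm x * fm y * (fm x)⁻¹ * (fm y)⁻¹ := by
      simp [map_mul, map_inv]
    rw [this]
    exact commutatorElement_eq_one_iff_commute.mpr hcomm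
  set π : RAAG Γ →* Aff := PresentedGroup.toGroup hrels with hπ
  have hπof : ∀ u : V, π (ofv Γ u) = fm u := fun u => PresentedGroup.toGroup.of hrels
  have hπgB : ∀ (i : Fin k) (c : ℤ), π (gB Pa i ^ c) = Aff.Tg ^ (ecoef Pa a i * c) := by
    intro i c
    rw [map_zpow]
    have hbS : (Pa i).base.1 ∈ st Γ m₀ := base_mem_S habelian hbase i
    have h1 : π (gB Pa i) = Aff.Tg ^ (ecoef Pa a i) := by
      unfold gB gen
      by_cases hia : (Pa i).base.1 = a
      · rcases hB : (Pa i).base.2 <;>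
          simp only [if_true, if_false, Bool.false_eq_true, map_inv, hπof, hfm] <;>
          rw [if_pos hia] <;> simp [ecoef, hia, hB]
      · have hnv : (Pa i).base.1 ≠ v := fun h => hv (h ▸ hbS)
        have hnv' : (Pa i).base.1 ≠ v' := fun h => hv' (h ▸ hbS)
        rcases hB : (Pa i).base.2 <;>
          simp only [if_true, if_false, Bool.false_eq_true, map_inv, hπof, hfm] <;>
          rw [if_neg hia, if_neg (by rintro (h | h) <;> [exact hnv h; exact hnv' h])] <;>
          simp [ecoef, hia]
    rw [h1, ← zpow_mul]
  have hπL : ∀ (e : Fin k → ℤ),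
      π ((List.ofFn fun i => gB Pa i ^ e i).prod)
        = Aff.Tg ^ (∑ i, ecoef Pa a i * e i) := by
    intro e
    rw [map_list_prod, List.map_ofFn]
    have h1 : List.ofFn (π ∘ fun i => gB Pa i ^ e i)
        = List.ofFn fun i => Aff.Tg ^ (ecoef Pa a i * e i) := by
      congr 1
      funext i
      exact hπgB i (e i)
    rw [h1]
    have h2 : (List.ofFn fun i => Aff.Tg ^ (ecoef Pa a i * e i))
        = (List.ofFn fun i => ecoef Pa a i * e i).map (fun z => Aff.Tg ^ z) := by
      rw [List.map_ofFn]; rfl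
    rw [h2, Aff.Tg_list, List.sum_ofFn]
  -- the conjugator commutes with `a`
  have hab : ∀ i : Fin k, a = (Pa i).base.1 ∨ a ∈ lk Γ ((Pa i).base.1) := by
    intro i
    have : a ∈ st Γ ((Pa i).base.1) := by
      rw [st_base habelian hbase i, ← ha]; exact mem_st_self Γ a
    rcases this with h | h
    · exact Or.inr h
    · exact Or.inl h
  have hfixa : ((List.ofFn fun i => φ i ^ n i).prod) (ofv Γ a) = ofv Γ a := by
    rw [bigPhi_apply habelian hbase hφ]
    have h1 : ∀ i : Fin k, gB Pa i ^ (n i * aexp (Pa i) a) = 1 := by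
      intro i; rw [aexp_eq_zero_of (hab i)]; simp
    have h2 : ∀ i : Fin k, gB Pa i ^ (n i * bexp (Pa i) a) = 1 := by
      intro i; rw [bexp_eq_zero_of (hab i)]; simp
    simp only [h1, h2]
    simp [List.prod_eq_one]
  have hG0a : G0 * ofv Γ a * G0⁻¹ = ofv Γ a := (hG0 (ofv Γ a)).symm.trans hfixa
  set Pg : Aff := π G0 with hPg
  have hfma : fm a = Aff.Tg := by simp [hfm]
  have hPgTg : Pg * Aff.Tg = Aff.Tg * Pg := by
    have := congrArg π hG0a
    rw [map_mul, map_mul, map_inv, hπof, hfma] at this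
    calc Pg * Aff.Tg = Pg * Aff.Tg * Pg⁻¹ * Pg := by group
      _ = Aff.Tg * Pg := by rw [this]
  have hPgt : Pg.t = 0 := by
    have h1 := congrArg Aff.t hPgTg
    simp [Aff.Tg] at h1
    linarith
  -- main equation for a vertex w ∈ {v, v'}
  have main : ∀ w : V, w ∉ st Γ m₀ → (w = v ∨ w = v') →
      ((Aff.u2 ^ (∑ i, ecoef Pa a i * (n i * aexp (Pa i) w)) : ℚˣ) : ℚ) = ((Pg.u : ℚˣ) : ℚ) ∧
      (∑ i, ecoef Pa a i * (n i * aexp (Pa i) w))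
        + (∑ i, ecoef Pa a i * (n i * bexp (Pa i) w)) = 0 := by
    intro w hw hw2
    have hwa : w ≠ a := fun h => hw (h ▸ haS)
    have hfmw : fm w = Aff.Ug := by
      simp only [hfm]; rw [if_neg hwa, if_pos hw2]
    have heq0 := congrArg π (hG0 (ofv Γ w))
    rw [map_mul, map_mul, map_inv, hπof, hfmw] at heq0
    rw [bigPhi_apply habelian hbase hφ, map_mul, map_mul, hπL, hπL, hπof, hfmw] at heq0
    set A := ∑ i, ecoef Pa a i * (n i * aexp (Pa i) w) with hA
    set B := ∑ i, ecoef Pa a i * (n i * bexp (Pa i) w) with hB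
    have hu := congrArg Aff.u heq0
    have ht := congrArg Aff.t heq0
    simp [Aff.Tg_zpow, Aff.Ug, hPgt] at hu ht
    constructor
    · rw [← ht]
      rw [Units.val_zpow_eq_zpow_val]
      rfl
    · have : Aff.u2 ^ (A + B) = Aff.u2 ^ (0 : ℤ) := by
        rw [zpow_add, zpow_zero, hu]
      have h2 : ((Aff.u2 ^ (A + B) : ℚˣ) : ℚ) = ((Aff.u2 ^ (0:ℤ) : ℚˣ) : ℚ) := by rw [this]
      rw [Units.val_zpow_eq_zpow_val, Units.val_zpow_eq_zpow_val, Aff.u2_val] at h2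
      exact zpow_right_injective₀ (by norm_num) (by norm_num) h2
  obtain ⟨hv1, hv2⟩ := main v hv (Or.inl rfl)
  obtain ⟨hv'1, -⟩ := main v' hv' (Or.inr rfl)
  constructor
  · have h2 : ((2:ℚ) ^ (∑ i, ecoef Pa a i * (n i * aexp (Pa i) v))
        = (2:ℚ) ^ (∑ i, ecoef Pa a i * (n i * aexp (Pa i) v'))) := by
      have := hv1.trans hv'1.symm
      rwa [Units.val_zpow_eq_zpow_val, Units.val_zpow_eq_zpow_val, Aff.u2_val] at this
    exact zpow_right_injective₀ (by norm_num) (by norm_num) h2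
  · exact hv2

end Analytic

/-- A pairwise compatible collection of distinct `ΓW`-partitions based at elements of
an abelian equivalence class `[m₀]` gives Whitehead automorphisms whose images in
`Out(A_Γ)` generate a free abelian subgroup of rank `k`: they pairwise commute as
outer automorphisms and any inner product of powers has all exponents zero. -/
theorem stmt10 {V : Type*} [Fintype V] (Γ : SimpleGraph V) (m₀ : V)
    (habelian : ∀ u : V, Eqv Γ m₀ u → st Γ u = st Γ m₀)
    (k : ℕ) (Pa : Fin k → GWPartition Γ)
    (hbase : ∀ i, Eqv Γ m₀ ((Pa i).base.1))
    (hne : ∀ i j, i ≠ j → sidesOf (Pa i) ≠ sidesOf (Pa j))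
    (hcomp : ∀ i j, i ≠ j → Compatible (Pa i) (Pa j))
    (φ : Fin k → MulAut (RAAG Γ))
    (hφ : ∀ i, IsWhitehead Γ (Pa i).P ((Pa i).base) (φ i)) :
    (∀ i j, CommuteOuter (φ i) (φ j)) ∧
    (∀ n : Fin k → ℤ, IsInner (List.ofFn fun i => φ i ^ n i).prod → ∀ i, n i = 0) := by
  classical
  have hcommAut : ∀ i j, φ i * φ j = φ j * φ i := by
    intro i j
    have hgen : ∀ v : V, (φ i) ((φ j) (ofv Γ v)) = (φ j) ((φ i) (ofv Γ v)) := by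
      intro v
      have e1 := phi_apply habelian hbase hφ i v
      have e2 := phi_apply habelian hbase hφ j v
      have L1 : (φ i) ((φ j) (ofv Γ v))
          = gB Pa j ^ aexp (Pa j) v *
            (gB Pa i ^ aexp (Pa i) v * ofv Γ v * gB Pa i ^ bexp (Pa i) v) *
            gB Pa j ^ bexp (Pa j) v := by
        rw [e2, map_mul, map_mul, map_zpow, map_zpow,
          phi_fix_gB habelian hbase hφ i j, e1]
      have L2 : (φ j) ((φ i) (ofv Γ v))
          = gB Pa i ^ aexp (Pa i) v *
            (gB Pa j ^ aexp (Pa j) v * ofv Γ v * gB Pa j ^ bexp (Pa j) v) *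
            gB Pa i ^ bexp (Pa i) v := by
        rw [e1, map_mul, map_mul, map_zpow, map_zpow,
          phi_fix_gB habelian hbase hφ j i, e2]
      rw [L1, L2]
      have c1 := ((commute_gB habelian hbase j i).zpow_zpow
        (aexp (Pa j) v) (aexp (Pa i) v)).eq
      have c2 := ((commute_gB habelian hbase i j).zpow_zpow
        (bexp (Pa i) v) (bexp (Pa j) v)).eq
      calc gB Pa j ^ aexp (Pa j) v *
            (gB Pa i ^ aexp (Pa i) v * ofv Γ v * gB Pa i ^ bexp (Pa i) v) *
            gB Pa j ^ bexp (Pa j) v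
          = (gB Pa j ^ aexp (Pa j) v * gB Pa i ^ aexp (Pa i) v) * ofv Γ v *
            (gB Pa i ^ bexp (Pa i) v * gB Pa j ^ bexp (Pa j) v) := by group
        _ = (gB Pa i ^ aexp (Pa i) v * gB Pa j ^ aexp (Pa j) v) * ofv Γ v *
            (gB Pa j ^ bexp (Pa j) v * gB Pa i ^ bexp (Pa i) v) := by rw [c1, c2]
        _ = _ := by group
    have hmon : ((φ i).toMonoidHom.comp (φ j).toMonoidHom)
        = ((φ j).toMonoidHom.comp (φ i).toMonoidHom) :=
      raag_hom_ext (fun v => hgen v)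
    apply MulEquiv.ext
    intro x
    have hx := DFunLike.congr_fun hmon x
    simpa [MulAut.mul_apply, MonoidHom.comp_apply] using hx
  constructor
  · intro i j
    refine ⟨1, fun x => ?_⟩
    have h1 : φ i * φ j * (φ i)⁻¹ * (φ j)⁻¹ = 1 := by
      rw [hcommAut i j]; group
    rw [h1]; simp
  · intro n hinner i
    obtain ⟨G0, hG0⟩ := hinner
    set a : V := (Pa i).base.1 with haDef
    have hsta : st Γ a = st Γ m₀ := st_base habelian hbase i
    have haS : a ∈ st Γ m₀ := hsta ▸ mem_st_self Γ a
    set T : Set (Vpm V) := (pm (lk Γ a))ᶜ with hTdef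
    set D : Set (Vpm V) := {x : Vpm V | x.1 ∉ st Γ m₀} with hDdef
    set Qs : Fin k → Set (Vpm V) :=
      fun j => if (Pa j).base.2 then (Pa j).P else (Pa j).Pstar with hQdef
    set Rs : Fin k → Set (Vpm V) :=
      fun j => if (Pa j).base.2 then (Pa j).Pstar else (Pa j).P with hRdef
    set J : Finset (Fin k) := Finset.univ.filter (fun j => (Pa j).base.1 = a) with hJdef
    have hJmem : ∀ j, j ∈ J ↔ (Pa j).base.1 = a := by
      intro j; rw [hJdef, Finset.mem_filter]
      exact ⟨fun h => h.2, fun h => ⟨Finset.mem_univ j, h⟩⟩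
    have hsides : ∀ j, ((Pa j).P = Qs j ∧ (Pa j).Pstar = Rs j) ∨
        ((Pa j).P = Rs j ∧ (Pa j).Pstar = Qs j) := by
      intro j
      by_cases hB : (Pa j).base.2
      · left; constructor <;> simp [hQdef, hRdef, hB]
      · right; constructor <;> simp [hQdef, hRdef, hB]
    have hQT : ∀ j ∈ J, Qs j ⊆ T := by
      intro j hj
      have hja := (hJmem j).mp hj
      have h1 : (Pa j).P ⊆ T := by
        rw [hTdef, ← hja]; exact side_subset_compl (Pa j).hP
      have h2 : (Pa j).Pstar ⊆ T := by
        intro x hx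
        rw [hTdef, ← hja]
        exact hx.1
      rw [hQdef]
      by_cases hB : (Pa j).base.2 <;> simp only [hB, if_true, if_false] <;>
        [exact h1; exact h2]
    have hRT : ∀ j ∈ J, Rs j ⊆ T := by
      intro j hj
      have hja := (hJmem j).mp hj
      have h1 : (Pa j).P ⊆ T := by
        rw [hTdef, ← hja]; exact side_subset_compl (Pa j).hP
      have h2 : (Pa j).Pstar ⊆ T := by
        intro x hx
        rw [hTdef, ← hja]
        exact hx.1
      rw [hRdef]
      by_cases hB : (Pa j).base.2 <;> simp only [hB, if_true, if_false] <;>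
        [exact h2; exact h1]
    have hQR_disj : ∀ j, ∀ x : Vpm V, x ∈ Qs j → x ∈ Rs j → False := by
      intro j x hxQ hxR
      rw [hQdef] at hxQ
      rw [hRdef] at hxR
      by_cases hB : (Pa j).base.2 <;> simp only [hB, if_true, if_false] at hxQ hxR
      · exact hxR.2 hxQ
      · exact hxQ.2 hxR
    have hTQR : ∀ j ∈ J, ∀ x ∈ T, x ∉ Qs j → x ∈ Rs j := by
      intro j hj x hxT hxQ
      have hja := (hJmem j).mp hj
      have hxlk : x.1 ∉ lk Γ ((Pa j).base.1) := by rw [hja]; exact hxT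
      rw [hQdef] at hxQ
      rw [hRdef]
      by_cases hB : (Pa j).base.2 <;> simp only [hB, if_true, if_false] at hxQ ⊢
      · exact ⟨hxlk, hxQ⟩
      · by_contra hxP
        exact hxQ ⟨hxlk, hxP⟩
    have hxpQ : ∀ j ∈ J, ((a, true) : Vpm V) ∈ Qs j := by
      intro j hj
      have hja := (hJmem j).mp hj
      rw [hQdef]
      by_cases hB : (Pa j).base.2 <;> simp only [hB, if_true, if_false]
      · have hb : (Pa j).base = ((a, true) : Vpm V) := Prod.ext hja hB
        rw [← hb]; exact (Pa j).hP.1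
      · have hB2 : (Pa j).base.2 = false := by simpa using hB
        have hb : pinv ((Pa j).base) = ((a, true) : Vpm V) := by
          simp [pinv, hja, hB2]
        rw [← hb]; exact (Pa j).hPstar.1
    have hxmR : ∀ j ∈ J, ((a, false) : Vpm V) ∈ Rs j := by
      intro j hj
      have hja := (hJmem j).mp hj
      rw [hRdef]
      by_cases hB : (Pa j).base.2 <;> simp only [hB, if_true, if_false]
      · have hb : pinv ((Pa j).base) = ((a, false) : Vpm V) := by
          simp [pinv, hja, hB]
        rw [← hb]; exact (Pa j).hPstar.1
      · have hB2 : (Pa j).base.2 = false := by simpa using hB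
        have hb : (Pa j).base = ((a, false) : Vpm V) := Prod.ext hja hB2
        rw [← hb]; exact (Pa j).hP.1
    have hxmQ : ∀ j ∈ J, ((a, false) : Vpm V) ∉ Qs j :=
      fun j hj h => hQR_disj j _ h (hxmR j hj)
    have hthQ : ∀ j ∈ J, 2 ≤ (Qs j).ncard := by
      intro j hj
      rw [hQdef]
      by_cases hB : (Pa j).base.2 <;> simp only [hB, if_true, if_false]
      · exact (Pa j).thickP
      · exact (Pa j).thickPstar
    have hthR : ∀ j ∈ J, 2 ≤ (Rs j).ncard := by
      intro j hj
      rw [hRdef]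
      by_cases hB : (Pa j).base.2 <;> simp only [hB, if_true, if_false]
      · exact (Pa j).thickPstar
      · exact (Pa j).thickP
    have hchain : ∀ j ∈ J, ∀ j' ∈ J, Qs j ⊆ Qs j' ∨ Qs j' ⊆ Qs j := by
      intro j hj j' hj'
      rcases eq_or_ne j j' with rfl | hne'
      · exact Or.inl subset_rfl
      have hja := (hJmem j).mp hj
      have hja' := (hJmem j').mp hj'
      rcases hcomp j j' hne' with (h | h | h | h) | ⟨hadj, -⟩
      pick_goal 5
      · exact absurd (hja' ▸ hja ▸ hadj) (Γ.irrefl)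
      all_goals {
        have hdisj : Qs j ∩ Qs j' = ∅ ∨ Qs j ∩ Rs j' = ∅ ∨
            Rs j ∩ Qs j' = ∅ ∨ Rs j ∩ Rs j' = ∅ := by
          rcases hsides j with ⟨e1, e2⟩ | ⟨e1, e2⟩ <;>
            rcases hsides j' with ⟨f1, f2⟩ | ⟨f1, f2⟩ <;>
            simp only [e1, e2, f1, f2] at h <;> tauto
        rcases hdisj with h0 | h0 | h0 | h0
        · exfalso
          rw [Set.eq_empty_iff_forall_notMem] at h0
          exact h0 _ ⟨hxpQ j hj, hxpQ j' hj'⟩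
        · left
          intro x hx
          by_contra hxQ'
          rw [Set.eq_empty_iff_forall_notMem] at h0
          exact h0 x ⟨hx, hTQR j' hj' x (hQT j hj hx) hxQ'⟩
        · right
          intro x hx
          by_contra hxQ
          rw [Set.eq_empty_iff_forall_notMem] at h0
          exact h0 x ⟨hTQR j hj x (hQT j' hj' hx) hxQ, hx⟩
        · exfalso
          rw [Set.eq_empty_iff_forall_notMem] at h0
          exact h0 _ ⟨hxmR j hj, hxmR j' hj'⟩ }
    have hdist : ∀ j ∈ J, ∀ j' ∈ J, j ≠ j' → Qs j ≠ Qs j' := by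
      intro j hj j' hj' hne' heq
      apply hne j j' hne'
      have hRT' : ∀ jj ∈ J, Rs jj = T \ Qs jj := by
        intro jj hjj
        ext x
        constructor
        · intro hx
          exact ⟨hRT jj hjj hx, fun hq => hQR_disj jj x hq hx⟩
        · rintro ⟨hxT, hxQ⟩
          exact hTQR jj hjj x hxT hxQ
      have hs1 : sidesOf (Pa j) = {Qs j, Rs j} := by
        rcases hsides j with ⟨e1, e2⟩ | ⟨e1, e2⟩
        · rw [sidesOf, e1, e2]
        · rw [sidesOf, e1, e2]; exact Set.pair_comm _ _
      have hs2 : sidesOf (Pa j') = {Qs j', Rs j'} := by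
        rcases hsides j' with ⟨e1, e2⟩ | ⟨e1, e2⟩
        · rw [sidesOf, e1, e2]
        · rw [sidesOf, e1, e2]; exact Set.pair_comm _ _
      rw [hs1, hs2, hRT' j hj, hRT' j' hj', heq]
    have hkey : ∀ x ∈ D, ∀ y ∈ D,
        (∑ i', ecoef Pa a i' * (n i' * indZ ((Pa i').P) x))
          = ∑ i', ecoef Pa a i' * (n i' * indZ ((Pa i').P) y) := by
      have hval : ∀ x : Vpm V, x ∈ D →
          (∑ i', ecoef Pa a i' * (n i' * indZ ((Pa i').P) x))
            = ∑ i', ecoef Pa a i' * (n i' * aexp (Pa i') x.1) := by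
        intro x hx
        have hxS : x.1 ∉ st Γ m₀ := hx
        have hxa : x.1 ≠ a := fun h => hxS (h ▸ haS)
        rcases hx2 : x.2 with hx2 | hx2
        · -- x.2 = false
          apply Finset.sum_congr rfl
          intro i' _
          by_cases hia : (Pa i').base.1 = a
          · have hxb : x.1 ≠ (Pa i').base.1 := by rw [hia]; exact hxa
            have hxeq : ((x.1, false) : Vpm V) = x := by rw [← hx2]
            have hae : aexp (Pa i') x.1 = indZ ((Pa i').P) x := by
              unfold aexp indZ
              rw [if_neg hxb, hxeq]
            rw [hae]
          · simp [ecoef, hia]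
        · -- x.2 = true
          have hsum : (∑ i', ecoef Pa a i' * (n i' * indZ ((Pa i').P) x))
              = -(∑ i', ecoef Pa a i' * (n i' * bexp (Pa i') x.1)) := by
            rw [← Finset.sum_neg_distrib]
            apply Finset.sum_congr rfl
            intro i' _
            by_cases hia : (Pa i').base.1 = a
            · have hxb : x.1 ≠ (Pa i').base.1 := by rw [hia]; exact hxa
              have hxeq : ((x.1, true) : Vpm V) = x := by rw [← hx2]
              have hbe : bexp (Pa i') x.1 = -(indZ ((Pa i').P) x) := by
                unfold bexp indZ
                rw [if_neg hxb, hxeq]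
                by_cases hxP : x ∈ (Pa i').P <;> simp [hxP]
              rw [hbe]; ring
            · simp [ecoef, hia]
          rw [hsum]
          have h0 := (Aconst habelian hbase hφ hG0 hsta hxS hxS).2
          linarith
      intro x hx y hy
      rw [hval x hx, hval y hy]
      exact (Aconst habelian hbase hφ hG0 hsta hx hy).1
    have hconv : ∀ x ∈ D,
        (∑ j ∈ J, n j * indZ (Qs j) x)
          = (∑ i', ecoef Pa a i' * (n i' * indZ ((Pa i').P) x))
            + ∑ j ∈ J, (if (Pa j).base.2 then 0 else n j) := by
      intro x hx
      have hxT : x ∈ T := fun hlk => hx (hsta ▸ Or.inl hlk)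
      rw [hJdef, Finset.sum_filter, Finset.sum_filter, ← Finset.sum_add_distrib]
      apply Finset.sum_congr rfl
      intro j _
      by_cases hja : (Pa j).base.1 = a
      · rw [if_pos hja, if_pos hja]
        by_cases hB : (Pa j).base.2
        · have hQ : Qs j = (Pa j).P := by rw [hQdef]; simp [hB]
          rw [hQ]
          simp only [ecoef, if_pos hja, hB, if_true]
          ring
        · have hQ : Qs j = (Pa j).Pstar := by rw [hQdef]; simp [hB]
          have hxlk : x.1 ∉ lk Γ ((Pa j).base.1) := by rw [hja]; exact hxT
          have hind : indZ ((Pa j).Pstar) x = 1 - indZ ((Pa j).P) x := by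
            by_cases hxP : x ∈ (Pa j).P
            · have hnp : x ∉ (Pa j).Pstar := fun hc => hc.2 hxP
              unfold indZ
              rw [if_pos hxP, if_neg hnp]
              norm_num
            · have hp : x ∈ (Pa j).Pstar := ⟨hxlk, hxP⟩
              unfold indZ
              rw [if_pos hp, if_neg hxP]
              norm_num
          rw [hQ, hind]
          simp only [ecoef, if_pos hja, hB, if_false]
          norm_num
          ring
      · rw [if_neg hja, if_neg hja]
        simp [ecoef, hja]
    have hGconst : ∀ x ∈ D, ∀ y ∈ D,
        (∑ j ∈ J, n j * indZ (Qs j) x) = ∑ j ∈ J, n j * indZ (Qs j) y := by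
      intro x hx y hy
      rw [hconv x hx, hconv y hy, hkey x hx y hy]
    have hth1' : ∀ j ∈ J, ∃ x ∈ Qs j, x ≠ ((a, true) : Vpm V) := by
      intro j hj
      obtain ⟨b, hb, hbne⟩ := Set.exists_ne_of_one_lt_ncard
        (lt_of_lt_of_le one_lt_two (hthQ j hj)) ((a, true) : Vpm V)
      exact ⟨b, hb, hbne⟩
    have hth2' : ∀ j ∈ J, ∃ x ∈ T \ Qs j, x ≠ ((a, false) : Vpm V) := by
      intro j hj
      obtain ⟨b, hbR, hbne⟩ := Set.exists_ne_of_one_lt_ncard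
        (lt_of_lt_of_le one_lt_two (hthR j hj)) ((a, false) : Vpm V)
      exact ⟨b, ⟨hRT j hj hbR, fun hbQ => hQR_disj j b hbQ hbR⟩, hbne⟩
    have hD' : ∀ x ∈ T, x ≠ ((a, true) : Vpm V) → x ≠ ((a, false) : Vpm V) → x ∈ D := by
      intro x hxT h1 h2
      show x.1 ∉ st Γ m₀
      rw [← hsta]
      rintro (h | h)
      · exact hxT h
      · have hx1 : x.1 = a := h
        rcases hx2 : x.2 with _ | _
        · exact h2 (Prod.ext hx1 hx2)
        · exact h1 (Prod.ext hx1 hx2)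
    have hfinal := chain_indep n Qs T D ((a, true) : Vpm V) ((a, false) : Vpm V) J
      hxpQ hxmQ hQT hth1' hth2' hD' hchain hdist hGconst i ((hJmem i).mpr rfl)
    exact hfinal

end GW
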